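/- Let F be a number field acting on a finite-dimensional ℚ-vector space V (so V is a finite-dimensional F-vector space), and let U be an F-invariant ℂ-subspace of V ⊗_ℚ ℂ such that V ⊗_ℚ ℂ is the internal direct sum of U and σ(U). Assume V ≠ 0 and that the action is rigid: the only ℂ-linear map σ(U) → U commuting with the action of every element of F is zero. Then F is totally imaginary, and there exist a natural number n, a CM-type Φ of F, and an F-linear isomorphism f : V ≅ F^n such that the ℂ-linear extension f ⊗ id_ℂ : V ⊗_ℚ ℂ ≅ (F ⊗_ℚ ℂ)^n maps U onto (U_Φ)^n. -/

import Mathlib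

open scoped TensorProduct

noncomputable section

instance : RingHomSurjective (starRingEnd ℂ) :=
  ⟨fun z => ⟨star z, by simp⟩⟩

/-- Complex conjugation as a `ℚ`-linear map on `ℂ`. -/
def conjQLin : ℂ →ₗ[ℚ] ℂ where
  toFun z := (starRingEnd ℂ) z
  map_add' := by intros; simp
  map_smul' := by intro q z; simp [Rat.smul_def, map_mul]

/-- The antilinear involution `σ` on `ℂ ⊗[ℚ] V` determined by conjugation on the
first factor, packaged as a `starRingEnd ℂ`-semilinear map. -/
def sigmaV (V : Type*) [AddCommGroup V] [Module ℚ V] :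
    (ℂ ⊗[ℚ] V) →ₛₗ[starRingEnd ℂ] (ℂ ⊗[ℚ] V) where
  toFun := TensorProduct.map conjQLin LinearMap.id
  map_add' := map_add _
  map_smul' c x := by
    induction x using TensorProduct.induction_on with
    | zero => simp
    | tmul z v =>
        simp [TensorProduct.smul_tmul', smul_eq_mul, conjQLin, map_mul]
    | add x y hx hy =>
        simp only [smul_add, map_add]
        exact congrArg₂ (· + ·) hx hy

/-- `σ(U)`, the image of a `ℂ`-subspace `U` of `ℂ ⊗[ℚ] V` under the conjugation
involution; it is again a `ℂ`-subspace. -/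
def sigmaSub {V : Type*} [AddCommGroup V] [Module ℚ V]
    (U : Submodule ℂ (ℂ ⊗[ℚ] V)) : Submodule ℂ (ℂ ⊗[ℚ] V) :=
  U.map (sigmaV V)

/-- A `ℂ`-linear map `f : P → Q` between subspaces of `ℂ ⊗[ℚ] V` commutes with an
operator `T` of the ambient space. -/
def CommutesWith {V : Type*} [AddCommGroup V] [Module ℚ V]
    (P Q : Submodule ℂ (ℂ ⊗[ℚ] V)) (f : P →ₗ[ℂ] Q)
    (T : (ℂ ⊗[ℚ] V) →ₗ[ℂ] (ℂ ⊗[ℚ] V)) : Prop :=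
  ∀ (x : P) (hx : T ↑x ∈ P), (f ⟨T ↑x, hx⟩ : ℂ ⊗[ℚ] V) = T ↑(f x)

/-- `E` is a polarization of the weight-one rational Hodge structure `(V, U)`:
it is alternating, its `ℂ`-bilinear extension vanishes on `U × U`, and
`-i·E_ℂ(u, σ u)` is a positive real for every nonzero `u ∈ U`. -/
def IsPolarization {V : Type*} [AddCommGroup V] [Module ℚ V]
    (U : Submodule ℂ (ℂ ⊗[ℚ] V)) (E : V →ₗ[ℚ] V →ₗ[ℚ] ℚ) : Prop :=
  (∀ x : V, E x x = 0) ∧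
  (∀ u ∈ U, ∀ u' ∈ U, LinearMap.BilinForm.baseChange ℂ E u u' = 0) ∧
  (∀ u ∈ U, u ≠ 0 → ∃ r : ℝ, 0 < r ∧
    -Complex.I * LinearMap.BilinForm.baseChange ℂ E u (sigmaV V u) = (r : ℂ))


/-- A field is totally real if every ring homomorphism to `ℂ` has image in `ℝ`. -/
def IsTotallyRealField (F : Type*) [Field F] : Prop :=
  ∀ σ : F →+* ℂ, ∀ x : F, ∃ r : ℝ, σ x = (r : ℂ)

/-- A field is totally imaginary if it admits no real embedding. -/
def IsTotallyImaginary (F : Type*) [Field F] : Prop :=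
  IsEmpty (F →+* ℝ)

/-- A number field is a CM-field if it is totally imaginary and is a quadratic
extension of a totally real subfield. -/
def IsCMField (F : Type*) [Field F] : Prop :=
  IsTotallyImaginary F ∧
    ∃ K : Subfield F, IsTotallyRealField K ∧ Module.finrank K F = 2

/-- A CM-type on `F`: a set of embeddings `F → ℂ` containing exactly one of each
conjugate pair. -/
def IsCMType (F : Type*) [Field F] (Φ : Set (F →+* ℂ)) : Prop :=
  ∀ σ : F →+* ℂ, Xor' (σ ∈ Φ) (σ ∈ (fun τ : F →+* ℂ => (starRingEnd ℂ).comp τ) '' Φ)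

/-- The `ℂ`-algebra homomorphism `σ̃ : F ⊗_ℚ ℂ → ℂ` (realized on `ℂ ⊗[ℚ] F`)
induced by an embedding `σ : F → ℂ`, as a `ℂ`-linear map: `σ̃(z ⊗ x) = z·σ(x)`. -/
def sigmaTilde (F : Type*) [Field F] [Algebra ℚ F] (σ : F →+* ℂ) :
    (ℂ ⊗[ℚ] F) →ₗ[ℂ] ℂ :=
  TensorProduct.AlgebraTensorModule.lift
    { toFun := fun z => z • (RingHom.equivRatAlgHom F ℂ σ).toLinearMap
      map_add' := fun a b => add_smul a b _
      map_smul' := fun c z => by simp [mul_smul] }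

/-- The Hodge structure `U_Φ ⊆ ℂ ⊗[ℚ] F` associated with a CM-type `Φ`: the subspace
annihilated by `σ̃` for every embedding `σ ∉ Φ`. -/
def UPhi (F : Type*) [Field F] [Algebra ℚ F] (Φ : Set (F →+* ℂ)) :
    Submodule ℂ (ℂ ⊗[ℚ] F) :=
  ⨅ σ ∈ {σ : F →+* ℂ | σ ∉ Φ}, LinearMap.ker (sigmaTilde F σ)

/-- Scalar multiplication by `a : 𝒜` as a `ℚ`-linear endomorphism of `V`. -/
def smulLin (𝒜 : Type*) [CommRing 𝒜] [Algebra ℚ 𝒜]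
    (V : Type*) [AddCommGroup V] [Module ℚ V] [Module 𝒜 V] [IsScalarTower ℚ 𝒜 V]
    (a : 𝒜) : V →ₗ[ℚ] V where
  toFun v := a • v
  map_add' := smul_add a
  map_smul' q v := smul_comm a q v


section Aux

variable (F : Type*) [Field F] [Algebra ℚ F]
variable (V : Type*) [AddCommGroup V] [Module ℚ V] [Module F V] [IsScalarTower ℚ F V]

/-- The action of `ℂ ⊗[ℚ] F` on `ℂ ⊗[ℚ] V`, as a `ℂ`-linear map into endomorphisms. -/
def rho : (ℂ ⊗[ℚ] F) →ₗ[ℂ] ((ℂ ⊗[ℚ] V) →ₗ[ℂ] (ℂ ⊗[ℚ] V)) :=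
  TensorProduct.AlgebraTensorModule.lift
    { toFun := fun z => z • ({ toFun := fun x => LinearMap.baseChange ℂ (smulLin F V x)
                               map_add' := by
                                 intro x y
                                 ext v
                                 simp [smulLin, add_smul, TensorProduct.tmul_add]
                               map_smul' := by
                                 intro q x
                                 ext v
                                 simp [smulLin, TensorProduct.tmul_smul] } :
                               F →ₗ[ℚ] ((ℂ ⊗[ℚ] V) →ₗ[ℂ] (ℂ ⊗[ℚ] V)))
      map_add' := fun a b => add_smul a b _
      map_smul' := fun c z => by simp [mul_smul] }

@[simp] lemma rho_tmul (z : ℂ) (x : F) :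
    rho F V (z ⊗ₜ x) = z • LinearMap.baseChange ℂ (smulLin F V x) := rfl

end Aux

section Ev

variable (F : Type*) [Field F] [Algebra ℚ F]

@[simp] lemma sigmaTilde_tmul (σ : F →+* ℂ) (z : ℂ) (x : F) :
    sigmaTilde F σ (z ⊗ₜ x) = z * σ x := by
  simp [sigmaTilde, RingHom.equivRatAlgHom, smul_eq_mul, RingHom.toRatAlgHom]

@[simp] lemma sigmaTilde_one (σ : F →+* ℂ) : sigmaTilde F σ 1 = 1 := by
  rw [Algebra.TensorProduct.one_def]
  simp

lemma sigmaTilde_mul (σ : F →+* ℂ) (a b : ℂ ⊗[ℚ] F) :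
    sigmaTilde F σ (a * b) = sigmaTilde F σ a * sigmaTilde F σ b := by
  induction a using TensorProduct.induction_on with
  | zero => simp
  | add a a' ha ha' => simp [add_mul, ha, ha']
  | tmul z x =>
    induction b using TensorProduct.induction_on with
    | zero => simp
    | add b b' hb hb' => simp [mul_add, hb, hb']
    | tmul w y => simp [Algebra.TensorProduct.tmul_mul_tmul, map_mul]; ring

/-- Evaluation of all embeddings at once. -/
def evAll : (ℂ ⊗[ℚ] F) →ₗ[ℂ] ((F →+* ℂ) → ℂ) :=
  LinearMap.pi (fun σ => sigmaTilde F σ)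

@[simp] lemma evAll_apply (a : ℂ ⊗[ℚ] F) (σ : F →+* ℂ) :
    evAll F a σ = sigmaTilde F σ a := rfl

end Ev

section EvBij

open scoped Classical

variable (F : Type*) [Field F] [NumberField F]

lemma evAll_surjective : Function.Surjective (evAll F) := by
  rw [← LinearMap.range_eq_top]
  by_contra h
  obtain ⟨φ, hφne, hφ⟩ :=
    Submodule.exists_dual_map_eq_bot_of_lt_top (lt_top_iff_ne_top.mpr h)
      (inferInstance : Module.Projective ℂ _)
  have hvanish : ∀ a : ℂ ⊗[ℚ] F, φ (evAll F a) = 0 := by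
    intro a
    have : φ (evAll F a) ∈ Submodule.map φ (LinearMap.range (evAll F)) :=
      Submodule.mem_map_of_mem (LinearMap.mem_range_self _ a)
    rwa [hφ, Submodule.mem_bot] at this
  have hφdecomp : ∀ c : (F →+* ℂ) → ℂ, φ c = ∑ σ : F →+* ℂ, c σ * φ (Pi.single σ 1) := by
    intro c
    conv_lhs => rw [← Finset.univ_sum_single c, map_sum]
    refine Finset.sum_congr rfl fun σ _ => ?_
    have : (Pi.single σ (c σ) : (F →+* ℂ) → ℂ) = c σ • (Pi.single σ 1 : (F →+* ℂ) → ℂ) := by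
      rw [← Pi.single_smul, smul_eq_mul, mul_one]
    rw [this, map_smul, smul_eq_mul]
  have hli : LinearIndependent ℂ (fun σ : F →+* ℂ => (σ : F → ℂ)) := by
    have := linearIndependent_monoidHom F ℂ
    exact this.comp (fun σ : F →+* ℂ => (σ : F →* ℂ))
      (fun σ τ hst => by
        ext x; exact DFunLike.congr_fun hst x)
  have hzero : ∀ σ : F →+* ℂ, φ (Pi.single σ 1) = 0 := by
    have := Fintype.linearIndependent_iff.mp hli (fun σ => φ (Pi.single σ 1)) ?_
    · exact this
    · funext x
      have := hvanish (1 ⊗ₜ x)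
      rw [hφdecomp] at this
      simpa [mul_comm] using this
  apply hφne
  refine LinearMap.ext fun c => ?_
  rw [hφdecomp]
  simp [hzero]

lemma evAll_bijective : Function.Bijective (evAll F) := by
  have hrank : Module.finrank ℂ (ℂ ⊗[ℚ] F) = Module.finrank ℂ ((F →+* ℂ) → ℂ) := by
    rw [Module.finrank_baseChange, Module.finrank_pi, NumberField.Embeddings.card F ℂ]
  exact ⟨(LinearMap.injective_iff_surjective_of_finrank_eq_finrank hrank).mpr
    (evAll_surjective F), evAll_surjective F⟩

/-- `evAll` as a linear equivalence. -/
def evEquiv : (ℂ ⊗[ℚ] F) ≃ₗ[ℂ] ((F →+* ℂ) → ℂ) :=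
  LinearEquiv.ofBijective (evAll F) (evAll_bijective F)

/-- The idempotent attached to an embedding. -/
def eIdem (σ : F →+* ℂ) : ℂ ⊗[ℚ] F := (evEquiv F).symm (Pi.single σ 1)

lemma sigmaTilde_eIdem (σ τ : F →+* ℂ) :
    sigmaTilde F τ (eIdem F σ) = if τ = σ then 1 else 0 := by
  have h : evAll F (eIdem F σ) = Pi.single σ 1 :=
    (evEquiv F).apply_symm_apply (Pi.single σ 1)
  have h2 := congrFun h τ
  simpa [Pi.single_apply] using h2

lemma eIdem_ne_zero (σ : F →+* ℂ) : eIdem F σ ≠ 0 := by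
  intro h
  have := congrFun (congrArg (fun a => evAll F a) (h : eIdem F σ = 0)) σ
  have h2 : sigmaTilde F σ (eIdem F σ) = 0 := by simpa using this
  rw [sigmaTilde_eIdem] at h2
  simp at h2

lemma sum_eIdem : ∑ σ : F →+* ℂ, eIdem F σ = 1 := by
  apply (evEquiv F).injective
  rw [map_sum]
  funext τ
  simp [Finset.sum_apply, evEquiv, sigmaTilde_eIdem, Finset.sum_ite_eq]

lemma mul_eIdem (x : F) (σ : F →+* ℂ) :
    (1 ⊗ₜ x : ℂ ⊗[ℚ] F) * eIdem F σ = σ x • eIdem F σ := by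
  apply (evEquiv F).injective
  rw [map_smul]
  funext τ
  simp only [evEquiv, LinearEquiv.ofBijective_apply, Pi.smul_apply, evAll_apply,
    sigmaTilde_mul, sigmaTilde_tmul, sigmaTilde_eIdem, one_mul, smul_eq_mul]
  by_cases h : τ = σ
  · subst h; simp
  · simp [h]

lemma eIdem_mul (x : F) (σ : F →+* ℂ) :
    eIdem F σ * (1 ⊗ₜ x : ℂ ⊗[ℚ] F) = σ x • eIdem F σ := by
  rw [mul_comm, mul_eIdem]

end EvBij

section ModuleTheory

variable (F : Type*) [Field F] [NumberField F]
variable (V : Type*) [AddCommGroup V] [Module ℚ V] [Module F V] [IsScalarTower ℚ F V]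

/-- The operator on `ℂ ⊗ V` induced by multiplication by `x : F`. -/
def TV (x : F) : (ℂ ⊗[ℚ] V) →ₗ[ℂ] (ℂ ⊗[ℚ] V) := LinearMap.baseChange ℂ (smulLin F V x)

lemma smulLin_mul (x y : F) :
    smulLin F V (x * y) = (smulLin F V x) ∘ₗ (smulLin F V y) := by
  ext v; simp [smulLin, mul_smul]

lemma rho_tmul_TV (z : ℂ) (x : F) : rho F V (z ⊗ₜ x) = z • TV F V x := rfl

lemma rho_mul (a b : ℂ ⊗[ℚ] F) :
    rho F V (a * b) = (rho F V a) ∘ₗ (rho F V b) := by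
  induction a using TensorProduct.induction_on with
  | zero =>
      simp only [zero_mul, map_zero]
      ext m; simp
  | add a a' ha ha' =>
      simp only [add_mul, map_add, ha, ha']
      ext m; simp
  | tmul z x =>
    induction b using TensorProduct.induction_on with
    | zero =>
        simp only [mul_zero, map_zero]
        ext m; simp
    | add b b' hb hb' =>
        simp only [mul_add, map_add, hb, hb']
        ext m; simp
    | tmul w y =>
        rw [Algebra.TensorProduct.tmul_mul_tmul, rho_tmul_TV, rho_tmul_TV, rho_tmul_TV]
        have h : TV F V (x * y) = (TV F V x) ∘ₗ (TV F V y) := by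
          simp only [TV, smulLin_mul, LinearMap.baseChange_comp]
        rw [h]
        ext m
        simp [mul_smul, smul_comm w z]

lemma rho_one : rho F V 1 = LinearMap.id := by
  rw [Algebra.TensorProduct.one_def, rho_tmul_TV, one_smul]
  have h : smulLin F V 1 = LinearMap.id := by ext v; simp [smulLin]
  simp only [TV, h, LinearMap.baseChange_id]

/-- The eigenspace of the `F`-action attached to an embedding `σ`. -/
def Wspace (σ : F →+* ℂ) : Submodule ℂ (ℂ ⊗[ℚ] V) :=
  ⨅ x : F, LinearMap.ker (TV F V x - σ x • LinearMap.id)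

lemma mem_Wspace {σ : F →+* ℂ} {m : ℂ ⊗[ℚ] V} :
    m ∈ Wspace F V σ ↔ ∀ x : F, TV F V x m = σ x • m := by
  simp [Wspace, Submodule.mem_iInf, LinearMap.mem_ker, sub_eq_zero, LinearMap.sub_apply]

lemma rho_apply_mem_Wspace {σ : F →+* ℂ} {m : ℂ ⊗[ℚ] V} (hm : m ∈ Wspace F V σ)
    (a : ℂ ⊗[ℚ] F) : rho F V a m = sigmaTilde F σ a • m := by
  induction a using TensorProduct.induction_on with
  | zero => simp
  | add a a' ha ha' => simp [ha, ha', add_smul]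
  | tmul z x =>
      rw [rho_tmul_TV, sigmaTilde_tmul]
      have := (mem_Wspace F V).mp hm x
      simp [this, mul_smul]

/-- The projection onto the `σ`-eigenspace. -/
def piProj (σ : F →+* ℂ) : (ℂ ⊗[ℚ] V) →ₗ[ℂ] (ℂ ⊗[ℚ] V) := rho F V (eIdem F σ)

lemma piProj_mem_Wspace (σ : F →+* ℂ) (m : ℂ ⊗[ℚ] V) :
    piProj F V σ m ∈ Wspace F V σ := by
  rw [mem_Wspace]
  intro x
  have h1 : TV F V x (piProj F V σ m) = rho F V ((1 ⊗ₜ x) * eIdem F σ) m := by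
    rw [rho_mul, rho_tmul_TV]
    simp [piProj]
  rw [h1, mul_eIdem, map_smul]
  rfl

lemma piProj_apply_mem_Wspace {σ : F →+* ℂ} {m : ℂ ⊗[ℚ] V} (hm : m ∈ Wspace F V σ) :
    piProj F V σ m = m := by
  rw [piProj, rho_apply_mem_Wspace F V hm, sigmaTilde_eIdem]
  simp

lemma sum_piProj (m : ℂ ⊗[ℚ] V) : ∑ σ : F →+* ℂ, piProj F V σ m = m := by
  have h : (∑ σ : F →+* ℂ, piProj F V σ) = LinearMap.id := by
    simp only [piProj, ← map_sum, sum_eIdem, rho_one]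
  calc ∑ σ : F →+* ℂ, piProj F V σ m = (∑ σ : F →+* ℂ, piProj F V σ) m := by
        simp [LinearMap.sum_apply]
    _ = m := by rw [h]; rfl

lemma piProj_comp_TV (σ : F →+* ℂ) (x : F) (m : ℂ ⊗[ℚ] V) :
    piProj F V σ (TV F V x m) = σ x • piProj F V σ m := by
  have h1 : piProj F V σ (TV F V x m) = rho F V (eIdem F σ * (1 ⊗ₜ x)) m := by
    rw [rho_mul, rho_tmul_TV]
    simp [piProj]
  rw [h1, eIdem_mul, map_smul]
  rfl

end ModuleTheory

section SigmaLemmas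

variable (F : Type*) [Field F] [NumberField F]
variable (V : Type*) [AddCommGroup V] [Module ℚ V] [Module F V] [IsScalarTower ℚ F V]

@[simp] lemma sigmaV_tmul (z : ℂ) (v : V) :
    sigmaV V (z ⊗ₜ v) = (starRingEnd ℂ) z ⊗ₜ v := rfl

@[simp] lemma sigmaV_sigmaV (m : ℂ ⊗[ℚ] V) : sigmaV V (sigmaV V m) = m := by
  induction m using TensorProduct.induction_on with
  | zero => simp
  | tmul z v => simp
  | add m m' hm hm' => simp [hm, hm']

lemma sigmaV_TV (x : F) (m : ℂ ⊗[ℚ] V) :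
    sigmaV V (TV F V x m) = TV F V x (sigmaV V m) := by
  induction m using TensorProduct.induction_on with
  | zero => simp
  | tmul z v => simp [TV, smulLin]
  | add m m' hm hm' => simp [hm, hm']

/-- The conjugate of an embedding. -/
def conjEmb {F : Type*} [Field F] (σ : F →+* ℂ) : F →+* ℂ := (starRingEnd ℂ).comp σ

@[simp] lemma conjEmb_conjEmb {F : Type*} [Field F] (σ : F →+* ℂ) :
    conjEmb (conjEmb σ) = σ := by
  ext x; simp [conjEmb]

lemma sigmaV_mem_Wspace {σ : F →+* ℂ} {m : ℂ ⊗[ℚ] V} (hm : m ∈ Wspace F V σ) :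
    sigmaV V m ∈ Wspace F V (conjEmb σ) := by
  rw [mem_Wspace] at hm ⊢
  intro x
  rw [← sigmaV_TV, hm x, LinearMap.map_smulₛₗ]
  rfl

lemma mem_sigmaSub {U : Submodule ℂ (ℂ ⊗[ℚ] V)} {m : ℂ ⊗[ℚ] V} :
    m ∈ sigmaSub U ↔ sigmaV V m ∈ U := by
  constructor
  · rintro ⟨u, hu, rfl⟩
    simpa using hu
  · intro h
    exact ⟨sigmaV V m, h, by simp⟩

lemma Wspace_le_iff_conj {U : Submodule ℂ (ℂ ⊗[ℚ] V)} {σ : F →+* ℂ} :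
    Wspace F V σ ≤ U ↔ Wspace F V (conjEmb σ) ≤ sigmaSub U := by
  constructor
  · intro h m hm
    rw [mem_sigmaSub]
    have h2 : sigmaV V m ∈ Wspace F V (conjEmb (conjEmb σ)) :=
      sigmaV_mem_Wspace F V hm
    rw [conjEmb_conjEmb] at h2
    exact h h2
  · intro h m hm
    have h2 := sigmaV_mem_Wspace F V hm
    have h3 := h h2
    rw [mem_sigmaSub, sigmaV_sigmaV] at h3
    exact h3

end SigmaLemmas

section MainLemmas

variable (F : Type*) [Field F] [NumberField F]
variable (V : Type*) [AddCommGroup V] [Module ℚ V] [Module F V] [IsScalarTower ℚ F V]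

lemma rho_mem_of_inv {U : Submodule ℂ (ℂ ⊗[ℚ] V)}
    (hinv : ∀ x : F, ∀ v ∈ U, LinearMap.baseChange ℂ (smulLin F V x) v ∈ U)
    (a : ℂ ⊗[ℚ] F) {u : ℂ ⊗[ℚ] V} (hu : u ∈ U) : rho F V a u ∈ U := by
  induction a using TensorProduct.induction_on with
  | zero => simpa using U.zero_mem
  | add a a' ha ha' =>
      rw [map_add]
      exact U.add_mem ha ha'
  | tmul z x =>
      rw [rho_tmul_TV]
      exact U.smul_mem z (hinv x u hu)

lemma sigmaSub_inv {U : Submodule ℂ (ℂ ⊗[ℚ] V)}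
    (hinv : ∀ x : F, ∀ v ∈ U, LinearMap.baseChange ℂ (smulLin F V x) v ∈ U)
    (x : F) {w : ℂ ⊗[ℚ] V} (hw : w ∈ sigmaSub U) :
    LinearMap.baseChange ℂ (smulLin F V x) w ∈ sigmaSub U := by
  rw [mem_sigmaSub] at hw ⊢
  have : sigmaV V (LinearMap.baseChange ℂ (smulLin F V x) w) =
      TV F V x (sigmaV V w) := sigmaV_TV F V x w
  rw [this]
  exact hinv x _ hw

lemma Wspace_ne_bot [Nontrivial V] (σ : F →+* ℂ) : Wspace F V σ ≠ ⊥ := by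
  obtain ⟨v, hv⟩ := exists_ne (0 : V)
  -- the map x ↦ x • v is injective
  set j : F →ₗ[ℚ] V :=
    { toFun := fun x => x • v
      map_add' := fun x y => add_smul x y v
      map_smul' := fun q x => by simp [smul_assoc] } with hj
  have hjinj : Function.Injective j := by
    intro x y hxy
    simp only [hj, LinearMap.coe_mk, AddHom.coe_mk] at hxy
    by_contra hne
    have : (x - y) • v = 0 := by rw [sub_smul, hxy, sub_self]
    rcases smul_eq_zero.mp this with h | h
    · exact hne (sub_eq_zero.mp h)
    · exact hv h
  have hbase : Function.Injective (LinearMap.baseChange ℂ j) := by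
    rw [LinearMap.baseChange_eq_ltensor]
    exact Module.Flat.lTensor_preserves_injective_linearMap j hjinj
  have hkey : ∀ a : ℂ ⊗[ℚ] F, rho F V a ((1 : ℂ) ⊗ₜ v) = LinearMap.baseChange ℂ j a := by
    intro a
    induction a using TensorProduct.induction_on with
    | zero => simp
    | add a a' ha ha' => simp [ha, ha']
    | tmul z x =>
        rw [rho_tmul_TV, LinearMap.baseChange_tmul]
        simp only [LinearMap.smul_apply, TV, LinearMap.baseChange_tmul]
        simp [hj, smulLin, TensorProduct.smul_tmul', smul_eq_mul, mul_one]
  rw [Submodule.ne_bot_iff]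
  refine ⟨piProj F V σ ((1 : ℂ) ⊗ₜ v), piProj_mem_Wspace F V σ _, ?_⟩
  rw [piProj, hkey]
  intro h
  have : LinearMap.baseChange ℂ j (eIdem F σ) = LinearMap.baseChange ℂ j 0 := by
    simpa using h
  exact eIdem_ne_zero F σ (hbase this)

end MainLemmas

section Dichotomy

variable (F : Type*) [Field F] [NumberField F]
variable (V : Type*) [AddCommGroup V] [Module ℚ V] [Module F V] [IsScalarTower ℚ F V]

lemma dichotomy [Nontrivial V] (U : Submodule ℂ (ℂ ⊗[ℚ] V))
    (hinv : ∀ x : F, ∀ v ∈ U, LinearMap.baseChange ℂ (smulLin F V x) v ∈ U)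
    (hcompl : IsCompl U (sigmaSub U))
    (hrigid : ∀ f : sigmaSub U →ₗ[ℂ] U,
      (∀ x : F, CommutesWith (sigmaSub U) U f
        (LinearMap.baseChange ℂ (smulLin F V x))) → f = 0)
    (σ : F →+* ℂ) :
    Xor' (Wspace F V σ ≤ U) (Wspace F V σ ≤ sigmaSub U) := by
  have hnotboth : ¬ (Wspace F V σ ≤ U ∧ Wspace F V σ ≤ sigmaSub U) := by
    rintro ⟨h1, h2⟩
    have : Wspace F V σ ≤ U ⊓ sigmaSub U := le_inf h1 h2
    rw [hcompl.inf_eq_bot] at this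
    exact Wspace_ne_bot F V σ (le_bot_iff.mp this)
  -- key rigidity step
  have hkey : U ⊓ Wspace F V σ = ⊥ ∨ sigmaSub U ⊓ Wspace F V σ = ⊥ := by
    by_contra hcon
    push_neg at hcon
    obtain ⟨hUW, hsW⟩ := hcon
    obtain ⟨u₀, hu₀, hu₀ne⟩ := Submodule.ne_bot_iff _ |>.mp hUW
    obtain ⟨w₀, hw₀, hw₀ne⟩ := Submodule.ne_bot_iff _ |>.mp hsW
    obtain ⟨hu₀U, hu₀W⟩ := Submodule.mem_inf.mp hu₀
    obtain ⟨hw₀s, hw₀W⟩ := Submodule.mem_inf.mp hw₀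
    -- a functional not vanishing at w₀
    have hdual : ∃ φ : Module.Dual ℂ (ℂ ⊗[ℚ] V), φ w₀ ≠ 0 := by
      by_contra hall
      push_neg at hall
      exact hw₀ne ((Module.forall_dual_apply_eq_zero_iff ℂ w₀).mp hall)
    obtain ⟨φ, hφ⟩ := hdual
    set lam : Module.Dual ℂ (ℂ ⊗[ℚ] V) := (φ w₀)⁻¹ • φ with hlam
    have hlamw₀ : lam w₀ = 1 := by
      simp [hlam, inv_mul_cancel₀ hφ]
    set μ : sigmaSub U →ₗ[ℂ] ℂ :=
      lam ∘ₗ (piProj F V σ) ∘ₗ (sigmaSub U).subtype with hμ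
    set f : sigmaSub U →ₗ[ℂ] U :=
      { toFun := fun w => μ w • (⟨u₀, hu₀U⟩ : U)
        map_add' := by intro a b; simp [add_smul]
        map_smul' := by intro c a; simp [mul_smul] } with hf
    have hcomm : ∀ x : F, CommutesWith (sigmaSub U) U f
        (LinearMap.baseChange ℂ (smulLin F V x)) := by
      intro x w hx
      have hTV : LinearMap.baseChange ℂ (smulLin F V x) (↑w) = TV F V x ↑w := rfl
      have hμval : μ ⟨LinearMap.baseChange ℂ (smulLin F V x) ↑w, hx⟩ = σ x * μ w := by
        simp only [hμ, LinearMap.comp_apply, Submodule.coe_subtype, hTV]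
        rw [piProj_comp_TV, map_smul, smul_eq_mul]
      have hu₀eig : TV F V x u₀ = σ x • u₀ := (mem_Wspace F V).mp hu₀W x
      show (↑(f ⟨LinearMap.baseChange ℂ (smulLin F V x) ↑w, hx⟩) : ℂ ⊗[ℚ] V) =
        LinearMap.baseChange ℂ (smulLin F V x) ↑(f w)
      simp only [hf, LinearMap.coe_mk, AddHom.coe_mk, hμval, Submodule.coe_smul_of_tower]
      rw [map_smul]
      have : LinearMap.baseChange ℂ (smulLin F V x) u₀ = σ x • u₀ := hu₀eig
      rw [this, mul_smul]
      rw [smul_comm]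
    have hf0 := hrigid f hcomm
    have : f ⟨w₀, hw₀s⟩ = 0 := by rw [hf0]; rfl
    have hval : (↑(f ⟨w₀, hw₀s⟩) : ℂ ⊗[ℚ] V) = u₀ := by
      simp only [hf, LinearMap.coe_mk, AddHom.coe_mk, hμ, LinearMap.comp_apply,
        Submodule.coe_subtype]
      rw [piProj_apply_mem_Wspace F V hw₀W, hlamw₀, one_smul]
    rw [this] at hval
    exact hu₀ne (by simpa using hval.symm)
  -- each element of Wspace decomposes
  have hdecomp : ∀ m ∈ Wspace F V σ,
      m = piProj F V σ m ∧ ∃ u ∈ U ⊓ Wspace F V σ, ∃ w ∈ sigmaSub U ⊓ Wspace F V σ,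
        m = u + w := by
    intro m hm
    refine ⟨(piProj_apply_mem_Wspace F V hm).symm, ?_⟩
    have htop : (U ⊔ sigmaSub U : Submodule ℂ (ℂ ⊗[ℚ] V)) = ⊤ := hcompl.sup_eq_top
    have : m ∈ (⊤ : Submodule ℂ (ℂ ⊗[ℚ] V)) := trivial
    rw [← htop] at this
    obtain ⟨u, hu, w, hw, huw⟩ := Submodule.mem_sup.mp this
    refine ⟨piProj F V σ u, Submodule.mem_inf.mpr
        ⟨rho_mem_of_inv F V hinv _ hu, piProj_mem_Wspace F V σ u⟩,
      piProj F V σ w, Submodule.mem_inf.mpr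
        ⟨rho_mem_of_inv F V (sigmaSub_inv F V hinv) _ hw, piProj_mem_Wspace F V σ w⟩, ?_⟩
    calc m = piProj F V σ m := (piProj_apply_mem_Wspace F V hm).symm
      _ = piProj F V σ (u + w) := by rw [huw]
      _ = piProj F V σ u + piProj F V σ w := map_add _ u w
  have hor : Wspace F V σ ≤ U ∨ Wspace F V σ ≤ sigmaSub U := by
    rcases hkey with h | h
    · right
      intro m hm
      obtain ⟨-, u, hu, w, hw, huw⟩ := hdecomp m hm
      rw [h, Submodule.mem_bot] at hu
      rw [huw, hu, zero_add]
      exact (Submodule.mem_inf.mp hw).1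
    · left
      intro m hm
      obtain ⟨-, u, hu, w, hw, huw⟩ := hdecomp m hm
      rw [h, Submodule.mem_bot] at hw
      rw [huw, hw, add_zero]
      exact (Submodule.mem_inf.mp hu).1
  rcases hor with h | h
  · exact Or.inl ⟨h, fun h2 => hnotboth ⟨h, h2⟩⟩
  · exact Or.inr ⟨h, fun h2 => hnotboth ⟨h2, h⟩⟩

end Dichotomy

section Membership

variable (F : Type*) [Field F] [NumberField F]
variable (V : Type*) [AddCommGroup V] [Module ℚ V] [Module F V] [IsScalarTower ℚ F V]

lemma mem_U_iff (U : Submodule ℂ (ℂ ⊗[ℚ] V))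
    (hinv : ∀ x : F, ∀ v ∈ U, LinearMap.baseChange ℂ (smulLin F V x) v ∈ U)
    (hcompl : IsCompl U (sigmaSub U))
    (hdich : ∀ σ : F →+* ℂ, Xor' (Wspace F V σ ≤ U) (Wspace F V σ ≤ sigmaSub U))
    (m : ℂ ⊗[ℚ] V) :
    m ∈ U ↔ ∀ σ : F →+* ℂ, ¬ (Wspace F V σ ≤ U) → piProj F V σ m = 0 := by
  constructor
  · intro hm σ hσ
    have hWs : Wspace F V σ ≤ sigmaSub U := by
      rcases hdich σ with ⟨h, -⟩ | ⟨h, -⟩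
      · exact absurd h hσ
      · exact h
    have h1 : piProj F V σ m ∈ U := rho_mem_of_inv F V hinv _ hm
    have h2 : piProj F V σ m ∈ sigmaSub U := hWs (piProj_mem_Wspace F V σ m)
    have : piProj F V σ m ∈ U ⊓ sigmaSub U := Submodule.mem_inf.mpr ⟨h1, h2⟩
    rwa [hcompl.inf_eq_bot, Submodule.mem_bot] at this
  · intro h
    rw [← sum_piProj F V m]
    refine Submodule.sum_mem U fun σ _ => ?_
    by_cases hσ : Wspace F V σ ≤ U
    · exact hσ (piProj_mem_Wspace F V σ m)
    · rw [h σ hσ]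
      exact U.zero_mem

lemma rho_F_eq_mul (a b : ℂ ⊗[ℚ] F) : rho F F a b = a * b := by
  induction a using TensorProduct.induction_on with
  | zero => simp
  | add a a' ha ha' => simp [ha, ha', add_mul]
  | tmul z x =>
    induction b using TensorProduct.induction_on with
    | zero => simp
    | add b b' hb hb' => rw [mul_add, ← hb, ← hb', map_add]
    | tmul w y =>
        rw [rho_tmul_TV, Algebra.TensorProduct.tmul_mul_tmul]
        simp [TV, smulLin, TensorProduct.smul_tmul', smul_eq_mul]

lemma piProj_F_eq_zero_iff (σ : F →+* ℂ) (b : ℂ ⊗[ℚ] F) :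
    piProj F F σ b = 0 ↔ sigmaTilde F σ b = 0 := by
  rw [piProj, rho_F_eq_mul]
  constructor
  · intro h
    have := congrArg (sigmaTilde F σ) h
    rwa [sigmaTilde_mul, sigmaTilde_eIdem, if_pos rfl, one_mul, map_zero] at this
  · intro h
    apply (evAll_bijective F).1
    rw [map_zero]
    funext τ
    simp only [evAll_apply, sigmaTilde_mul, sigmaTilde_eIdem, Pi.zero_apply]
    by_cases hτ : τ = σ
    · subst hτ; rw [h]; ring
    · rw [if_neg hτ]; ring

lemma mem_UPhi_iff (Φ : Set (F →+* ℂ)) (b : ℂ ⊗[ℚ] F) :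
    b ∈ UPhi F Φ ↔ ∀ σ : F →+* ℂ, σ ∉ Φ → sigmaTilde F σ b = 0 := by
  simp [UPhi, Submodule.mem_iInf, LinearMap.mem_ker]

end Membership

section Gmap

variable (F : Type*) [Field F] [NumberField F]
variable (V : Type*) [AddCommGroup V] [Module ℚ V] [Module F V] [IsScalarTower ℚ F V]
variable (n : ℕ) (f : V ≃ₗ[F] (Fin n → F))

/-- The comparison map used in the statement. -/
def GmapL : (ℂ ⊗[ℚ] V) →ₗ[ℂ] (Fin n → ℂ ⊗[ℚ] F) :=
  (TensorProduct.piRight ℚ ℂ ℂ (fun _ : Fin n => F)).toLinearMap ∘ₗ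
    LinearMap.baseChange ℂ (f.toLinearMap.restrictScalars ℚ)

lemma GmapL_tmul (z : ℂ) (v : V) (i : Fin n) :
    GmapL F V n f (z ⊗ₜ v) i = z ⊗ₜ (f v i) := by
  simp [GmapL, TensorProduct.piRightHom_tmul]

lemma baseChange_bijective_aux {W W' : Type*} [AddCommGroup W] [Module ℚ W]
    [AddCommGroup W'] [Module ℚ W']
    (g : W →ₗ[ℚ] W') (h : W' →ₗ[ℚ] W) (hgh : g ∘ₗ h = LinearMap.id)
    (hhg : h ∘ₗ g = LinearMap.id) :
    Function.Bijective (LinearMap.baseChange ℂ g) := by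
    have h1 : (LinearMap.baseChange ℂ g) ∘ₗ (LinearMap.baseChange ℂ h) = LinearMap.id := by
      rw [← LinearMap.baseChange_comp, hgh, LinearMap.baseChange_id]
    have h2 : (LinearMap.baseChange ℂ h) ∘ₗ (LinearMap.baseChange ℂ g) = LinearMap.id := by
      rw [← LinearMap.baseChange_comp, hhg, LinearMap.baseChange_id]
    constructor
    · intro a b hab
      have := congrArg (LinearMap.baseChange ℂ h) hab
      calc a = (LinearMap.baseChange ℂ h ∘ₗ LinearMap.baseChange ℂ g) a := by rw [h2]; rfl
        _ = (LinearMap.baseChange ℂ h ∘ₗ LinearMap.baseChange ℂ g) b := this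
        _ = b := by rw [h2]; rfl
    · intro c
      refine ⟨LinearMap.baseChange ℂ h c, ?_⟩
      calc LinearMap.baseChange ℂ g (LinearMap.baseChange ℂ h c)
          = (LinearMap.baseChange ℂ g ∘ₗ LinearMap.baseChange ℂ h) c := rfl
        _ = c := by rw [h1]; rfl

lemma GmapL_bijective : Function.Bijective (GmapL F V n f) := by
  have hg := baseChange_bijective_aux (f.toLinearMap.restrictScalars ℚ)
    (f.symm.toLinearMap.restrictScalars ℚ) (by ext w; simp) (by ext v; simp)
  have hcoe : ⇑(GmapL F V n f) = ⇑(TensorProduct.piRight ℚ ℂ ℂ (fun _ : Fin n => F)) ∘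
      ⇑(LinearMap.baseChange ℂ (f.toLinearMap.restrictScalars ℚ)) := rfl
  rw [hcoe]
  exact ((TensorProduct.piRight ℚ ℂ ℂ (fun _ : Fin n => F)).bijective).comp hg

lemma GmapL_TV (x : F) (m : ℂ ⊗[ℚ] V) (i : Fin n) :
    GmapL F V n f (TV F V x m) i = TV F F x (GmapL F V n f m i) := by
  induction m using TensorProduct.induction_on with
  | zero => simp
  | add m m' hm hm' => simp only [map_add, Pi.add_apply, hm, hm']
  | tmul z v =>
      have h1 : TV F V x (z ⊗ₜ v) = z ⊗ₜ (x • v) := by simp [TV, smulLin]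
      rw [h1, GmapL_tmul, GmapL_tmul]
      have h2 : TV F F x (z ⊗ₜ (f v i)) = z ⊗ₜ (x • (f v i)) := by simp [TV, smulLin]
      rw [h2, map_smul]
      rfl

lemma GmapL_rho (a : ℂ ⊗[ℚ] F) (m : ℂ ⊗[ℚ] V) (i : Fin n) :
    GmapL F V n f (rho F V a m) i = rho F F a (GmapL F V n f m i) := by
  induction a using TensorProduct.induction_on with
  | zero => simp
  | add a a' ha ha' => simp only [map_add, LinearMap.add_apply, Pi.add_apply, ha, ha']
  | tmul z x =>
      rw [rho_tmul_TV, rho_tmul_TV]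
      simp only [LinearMap.smul_apply, map_smul, Pi.smul_apply]
      rw [GmapL_TV]

lemma GmapL_piProj (σ : F →+* ℂ) (m : ℂ ⊗[ℚ] V) (i : Fin n) :
    GmapL F V n f (piProj F V σ m) i = piProj F F σ (GmapL F V n f m i) :=
  GmapL_rho F V n f (eIdem F σ) m i

end Gmap

/-- A rigid action of a number field `F` on a nonzero weight-one rational Hodge
structure forces `F` to be totally imaginary, and the Hodge structure to be isomorphic
to a power of the Hodge structure attached to a CM-type of `F`. -/
theorem rigid_numberField_action_isom_power_of_CMType
    (F : Type*) [Field F] [NumberField F]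
    (V : Type*) [AddCommGroup V] [Module ℚ V] [FiniteDimensional ℚ V] [Nontrivial V]
    [Module F V] [IsScalarTower ℚ F V]
    (U : Submodule ℂ (ℂ ⊗[ℚ] V))
    (hinv : ∀ x : F, ∀ v ∈ U, LinearMap.baseChange ℂ (smulLin F V x) v ∈ U)
    (hcompl : IsCompl U (sigmaSub U))
    (hrigid : ∀ f : sigmaSub U →ₗ[ℂ] U,
      (∀ x : F, CommutesWith (sigmaSub U) U f
        (LinearMap.baseChange ℂ (smulLin F V x))) → f = 0) :
    IsEmpty (F →+* ℝ) ∧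
      ∃ (n : ℕ) (Φ : Set (F →+* ℂ)), IsCMType F Φ ∧
        ∃ f : V ≃ₗ[F] (Fin n → F),
          Submodule.map
            ((TensorProduct.piRight ℚ ℂ ℂ (fun _ : Fin n => F)).toLinearMap ∘ₗ
              LinearMap.baseChange ℂ (f.toLinearMap.restrictScalars ℚ)) U =
            Submodule.pi Set.univ (fun _ => UPhi F Φ) := by
  classical
  set Φ : Set (F →+* ℂ) := {σ | Wspace F V σ ≤ U} with hΦdef
  have hdich := dichotomy F V U hinv hcompl hrigid
  have hconjmem : ∀ σ : F →+* ℂ,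
      (σ ∈ (fun τ : F →+* ℂ => (starRingEnd ℂ).comp τ) '' Φ) ↔ conjEmb σ ∈ Φ := by
    intro σ
    constructor
    · rintro ⟨τ, hτ, hτσ⟩
      have hτeq : τ = conjEmb σ := by
        rw [← hτσ]
        exact (conjEmb_conjEmb τ).symm
      rwa [← hτeq]
    · intro h
      exact ⟨conjEmb σ, h, conjEmb_conjEmb σ⟩
  have hΦconj : ∀ σ : F →+* ℂ, (conjEmb σ ∈ Φ) ↔ Wspace F V σ ≤ sigmaSub U := by
    intro σ
    show Wspace F V (conjEmb σ) ≤ U ↔ _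
    have h := Wspace_le_iff_conj F V (U := U) (σ := conjEmb σ)
    rwa [conjEmb_conjEmb] at h
  have hCM : IsCMType F Φ := by
    intro σ
    rcases hdich σ with ⟨h1, h2⟩ | ⟨h1, h2⟩
    · exact Or.inl ⟨h1, fun hc => h2 ((hΦconj σ).mp ((hconjmem σ).mp hc))⟩
    · exact Or.inr ⟨(hconjmem σ).mpr ((hΦconj σ).mpr h1), fun hc => h2 hc⟩
  have hempty : IsEmpty (F →+* ℝ) := by
    refine ⟨fun r => ?_⟩
    set σ : F →+* ℂ := Complex.ofRealHom.comp r with hσdef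
    have hσ : conjEmb σ = σ := by
      ext x
      simp [conjEmb, hσdef, Complex.conj_ofReal]
    rcases hCM σ with ⟨h1, h2⟩ | ⟨h1, h2⟩
    · refine h2 ((hconjmem σ).mpr ?_)
      rwa [hσ]
    · refine h2 ?_
      have := (hconjmem σ).mp h1
      rwa [hσ] at this
  haveI : Module.Finite F V := Module.Finite.of_restrictScalars_finite ℚ F V
  set n := Module.finrank F V with hn
  let f : V ≃ₗ[F] (Fin n → F) := (Module.finBasis F V).equivFun
  refine ⟨hempty, n, Φ, hCM, f, ?_⟩
  show Submodule.map (GmapL F V n f) U = Submodule.pi Set.univ (fun _ => UPhi F Φ)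
  have hiff : ∀ m : ℂ ⊗[ℚ] V,
      GmapL F V n f m ∈ Submodule.pi Set.univ (fun _ => UPhi F Φ) ↔ m ∈ U := by
    intro m
    rw [Submodule.mem_pi]
    rw [mem_U_iff F V U hinv hcompl hdich m]
    constructor
    · intro h σ hσ
      apply (GmapL_bijective F V n f).1
      rw [map_zero]
      funext i
      simp only [Pi.zero_apply]
      rw [GmapL_piProj, piProj_F_eq_zero_iff]
      simpa using (mem_UPhi_iff F Φ _).mp (h i trivial) σ hσ
    · intro hm i _
      rw [mem_UPhi_iff]
      intro σ hσ
      have h0 : piProj F V σ m = 0 := hm σ hσ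
      have hkey := GmapL_piProj F V n f σ m i
      rw [h0, map_zero] at hkey
      have hz : piProj F F σ (GmapL F V n f m i) = 0 := by
        rw [← hkey]; rfl
      exact (piProj_F_eq_zero_iff F σ _).mp hz
  ext p
  simp only [Submodule.mem_map]
  constructor
  · rintro ⟨m, hm, rfl⟩
    exact (hiff m).mpr hm
  · intro hp
    obtain ⟨m, rfl⟩ := (GmapL_bijective F V n f).2 p
    exact ⟨m, (hiff m).mp hp, rfl⟩

end
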